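/- arXiv:0903.1793 — 5 statements merged into one kernel-verified Lean document; each statement's English description precedes it below -/
import Mathlib

section
/- Let ε and ε' be two continuous controls on [0,T]. Let ψ̃, ψ̂ be the solutions of the Schrödinger equation with control ε and Hermitian dipoles μ̃, μ̂ respectively, and ψ̃', ψ̂' the solutions with control ε' and dipoles μ̃, μ̂ respectively, all with the same initial state ψ₀. Let χ̃ solve i χ̃'(t) = (H + ε(t) μ̃) χ̃(t) and χ̂ solve i χ̂'(t) = (H + ε(t) μ̂) χ̂(t), both with terminal condition χ̃(T) = χ̂(T) = O_{ψ₁}(ψ̃(T) − ψ̂(T)). Set δψ(T) = ψ̃(T) − ψ̂(T) and δψ'(T) = ψ̃'(T) − ψ̂'(T). Then J(ε') − J(ε) = ⟨δψ'(T) − δψ(T), O_{ψ₁}(δψ'(T) − δψ(T))⟩ + ∫₀ᵀ (ε'(t) − ε(t)) · ( 2 Im⟨χ̃(t), μ̃ ψ̃'(t)⟩ − 2 Im⟨χ̂(t), μ̂ ψ̂'(t)⟩ − β (ε'(t) + ε(t)) ) dt. -/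
noncomputable section

open Matrix

/-- `ψ` solves the bilinear Schrödinger equation
`i ψ'(t) = (H + ε(t) μ) ψ(t)` on `[0, T]` with initial state `ψ₀`. -/
def IsSchrodSol {n : ℕ} (H μ : Matrix (Fin n) (Fin n) ℂ) (ε : ℝ → ℝ)
    (ψ₀ : EuclideanSpace ℂ (Fin n)) (T : ℝ) (ψ : ℝ → EuclideanSpace ℂ (Fin n)) : Prop :=
  ψ 0 = ψ₀ ∧ ∀ t ∈ Set.Icc (0 : ℝ) T,
    HasDerivAt ψ ((-Complex.I) • (Matrix.toEuclideanLin (H + (ε t : ℂ) • μ) (ψ t))) t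

/-- `χ` solves the adjoint equation `i χ'(t) = (H + ε(t) μ) χ(t)` on `[0, T]`
with terminal state `χ(T) = χT`. -/
def IsSchrodAdjSol {n : ℕ} (H μ : Matrix (Fin n) (Fin n) ℂ) (ε : ℝ → ℝ)
    (χT : EuclideanSpace ℂ (Fin n)) (T : ℝ) (χ : ℝ → EuclideanSpace ℂ (Fin n)) : Prop :=
  χ T = χT ∧ ∀ t ∈ Set.Icc (0 : ℝ) T,
    HasDerivAt χ ((-Complex.I) • (Matrix.toEuclideanLin (H + (ε t : ℂ) • μ) (χ t))) t

/-- The rank-one observable `O_{ψ₁} : x ↦ ⟨ψ₁, x⟩ ψ₁`. -/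
def rankOne {n : ℕ} (ψ₁ x : EuclideanSpace ℂ (Fin n)) : EuclideanSpace ℂ (Fin n) :=
  (inner ℂ ψ₁ x : ℂ) • ψ₁

/-- The selectivity functional
`J(ε) = ⟨ψ̃(T) − ψ̂(T), O_{ψ₁}(ψ̃(T) − ψ̂(T))⟩ − β ∫₀ᵀ ε(t)² dt`. -/
def Jfun {n : ℕ} (T β : ℝ) (ψ₁ : EuclideanSpace ℂ (Fin n)) (ε : ℝ → ℝ)
    (ψt ψh : ℝ → EuclideanSpace ℂ (Fin n)) : ℝ :=
  (inner ℂ (ψt T - ψh T) (rankOne ψ₁ (ψt T - ψh T)) : ℂ).re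
    - β * ∫ t in (0:ℝ)..T, (ε t) ^ 2

/-- Core pointwise derivative computation. -/
lemma key_deriv {n : ℕ} {H μ : Matrix (Fin n) (Fin n) ℂ} (hH : H.IsHermitian) (hμ : μ.IsHermitian)
    {ε ε' : ℝ → ℝ} {χ ψ ψ' : ℝ → EuclideanSpace ℂ (Fin n)} {t : ℝ}
    (hχ : HasDerivAt χ ((-Complex.I) • (Matrix.toEuclideanLin (H + (ε t : ℂ) • μ) (χ t))) t)
    (hψ : HasDerivAt ψ ((-Complex.I) • (Matrix.toEuclideanLin (H + (ε t : ℂ) • μ) (ψ t))) t)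
    (hψ' : HasDerivAt ψ' ((-Complex.I) • (Matrix.toEuclideanLin (H + (ε' t : ℂ) • μ) (ψ' t))) t) :
    HasDerivAt (fun s => (inner ℂ (χ s) (ψ' s - ψ s) : ℂ).re)
      ((ε' t - ε t) * (inner ℂ (χ t) (Matrix.toEuclideanLin μ (ψ' t)) : ℂ).im) t := by
  have h1 := HasDerivAt.inner ℂ hχ (hψ'.sub hψ)
  have h2 := (Complex.reCLM.hasFDerivAt.comp_hasDerivAt t h1)
  convert h2 using 1
  case e'_4 => rfl
  case e'_5 => rfl
  case e'_8 => rfl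
  have hsym : ∀ (A : Matrix (Fin n) (Fin n) ℂ), A.IsHermitian → ∀ (x y : EuclideanSpace ℂ (Fin n)),
      (inner ℂ (Matrix.toEuclideanLin A x) y : ℂ) = inner ℂ x (Matrix.toEuclideanLin A y) :=
    fun A hA x y => (Matrix.isHermitian_iff_isSymmetric.mp hA) x y
  have key : (inner ℂ (χ t) ((-Complex.I) • (Matrix.toEuclideanLin (H + (ε' t : ℂ) • μ) (ψ' t)) -
        (-Complex.I) • (Matrix.toEuclideanLin (H + (ε t : ℂ) • μ) (ψ t))) : ℂ)
      + inner ℂ ((-Complex.I) • (Matrix.toEuclideanLin (H + (ε t : ℂ) • μ) (χ t))) (ψ' t - ψ t)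
      = ((ε' t - ε t : ℝ) : ℂ) * (-Complex.I * inner ℂ (χ t) (Matrix.toEuclideanLin μ (ψ' t))) := by
    simp only [map_add, _root_.map_smul, LinearMap.add_apply, LinearMap.smul_apply,
      inner_smul_left, inner_smul_right, inner_sub_right, inner_sub_left, inner_add_right,
      inner_add_left, smul_sub, smul_add, map_neg, _root_.map_mul, Complex.conj_I,
      Complex.conj_ofReal, smul_smul]
    rw [hsym H hH, hsym H hH (χ t) (ψ t), hsym μ hμ, hsym μ hμ (χ t) (ψ t)]
    push_cast
    ring
  simp only [Complex.reCLM_apply, Function.comp] at h2 ⊢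
  rw [Pi.sub_apply, key]
  simp [Complex.mul_re, Complex.mul_im, Complex.I_re, Complex.I_im, Complex.ofReal_re,
    Complex.ofReal_im]

/-- FTC applied to the pointwise derivative. -/
lemma integral_key {n : ℕ} {H μ : Matrix (Fin n) (Fin n) ℂ} (hH : H.IsHermitian)
    (hμ : μ.IsHermitian) {T : ℝ} (hT : 0 < T) {ε ε' : ℝ → ℝ}
    (hε : Continuous ε) (hε' : Continuous ε')
    {ψ₀ χT : EuclideanSpace ℂ (Fin n)} {χ ψ ψ' : ℝ → EuclideanSpace ℂ (Fin n)}
    (hψ : IsSchrodSol H μ ε ψ₀ T ψ) (hψ' : IsSchrodSol H μ ε' ψ₀ T ψ')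
    (hχ : IsSchrodAdjSol H μ ε χT T χ) :
    ∫ t in (0:ℝ)..T, (ε' t - ε t) * (inner ℂ (χ t) (Matrix.toEuclideanLin μ (ψ' t)) : ℂ).im
      = (inner ℂ (χ T) (ψ' T - ψ T) : ℂ).re := by
  have hIcc : Set.uIcc (0:ℝ) T = Set.Icc 0 T := Set.uIcc_of_le hT.le
  have hχc : ContinuousOn χ (Set.Icc 0 T) :=
    fun t ht => ((hχ.2 t ht).continuousAt).continuousWithinAt
  have hψ'c : ContinuousOn ψ' (Set.Icc 0 T) :=
    fun t ht => ((hψ'.2 t ht).continuousAt).continuousWithinAt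
  have hMc : Continuous (Matrix.toEuclideanLin μ) :=
    LinearMap.continuous_of_finiteDimensional _
  have hintg : ContinuousOn
      (fun t => (ε' t - ε t) * (inner ℂ (χ t) (Matrix.toEuclideanLin μ (ψ' t)) : ℂ).im)
      (Set.Icc 0 T) := by
    apply ContinuousOn.mul ((hε'.sub hε).continuousOn)
    exact Complex.continuous_im.comp_continuousOn (ContinuousOn.inner hχc
      (hMc.comp_continuousOn hψ'c))
  have hFTC := intervalIntegral.integral_eq_sub_of_hasDerivAt
    (f := fun s => (inner ℂ (χ s) (ψ' s - ψ s) : ℂ).re)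
    (f' := fun t => (ε' t - ε t) * (inner ℂ (χ t) (Matrix.toEuclideanLin μ (ψ' t)) : ℂ).im)
    (by
      intro x hx
      rw [hIcc] at hx
      exact key_deriv hH hμ (hχ.2 x hx) (hψ.2 x hx) (hψ'.2 x hx))
    ((by rw [hIcc]; exact hintg :
      ContinuousOn _ (Set.uIcc (0:ℝ) T)).intervalIntegrable)
  rw [hFTC]
  simp only [hψ'.1, hψ.1, sub_self, inner_zero_right]
  simp

lemma rankOne_expand {n : ℕ} (ψ₁ a b : EuclideanSpace ℂ (Fin n)) :
    (inner ℂ a (rankOne ψ₁ a) : ℂ).re - (inner ℂ b (rankOne ψ₁ b) : ℂ).re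
      = (inner ℂ (a - b) (rankOne ψ₁ (a - b)) : ℂ).re
        + 2 * (inner ℂ (rankOne ψ₁ b) (a - b) : ℂ).re := by
  simp only [rankOne, inner_smul_right, inner_smul_left, inner_sub_left, inner_sub_right,
    map_sub, ← inner_conj_symm ψ₁ a, ← inner_conj_symm ψ₁ b]
  set u := (inner ℂ ψ₁ a : ℂ)
  set v := (inner ℂ ψ₁ b : ℂ)
  simp only [Complex.mul_re, Complex.sub_re, Complex.sub_im, Complex.conj_re, Complex.conj_im]
  ring


/-- the variation identity for the selectivity functional. -/
theorem variation_identity {n : ℕ} (T β : ℝ) (hT : 0 < T) (hβ : 0 < β)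
    (H : Matrix (Fin n) (Fin n) ℂ) (hH : H.IsHermitian)
    (ψ₀ ψ₁ : EuclideanSpace ℂ (Fin n)) (hψ₀ : ‖ψ₀‖ = 1) (hψ₁ : ‖ψ₁‖ = 1)
    (μt μh : Matrix (Fin n) (Fin n) ℂ) (hμt : μt.IsHermitian) (hμh : μh.IsHermitian)
    (ε ε' : ℝ → ℝ) (hε : Continuous ε) (hε' : Continuous ε')
    (ψt ψh ψt' ψh' : ℝ → EuclideanSpace ℂ (Fin n))
    (hψt : IsSchrodSol H μt ε ψ₀ T ψt) (hψh : IsSchrodSol H μh ε ψ₀ T ψh)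
    (hψt' : IsSchrodSol H μt ε' ψ₀ T ψt') (hψh' : IsSchrodSol H μh ε' ψ₀ T ψh')
    (χt χh : ℝ → EuclideanSpace ℂ (Fin n))
    (hχt : IsSchrodAdjSol H μt ε (rankOne ψ₁ (ψt T - ψh T)) T χt)
    (hχh : IsSchrodAdjSol H μh ε (rankOne ψ₁ (ψt T - ψh T)) T χh) :
    Jfun T β ψ₁ ε' ψt' ψh' - Jfun T β ψ₁ ε ψt ψh =
      (inner ℂ ((ψt' T - ψh' T) - (ψt T - ψh T))
        (rankOne ψ₁ ((ψt' T - ψh' T) - (ψt T - ψh T))) : ℂ).re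
      + ∫ t in (0:ℝ)..T, (ε' t - ε t) *
          (2 * (inner ℂ (χt t) (Matrix.toEuclideanLin μt (ψt' t)) : ℂ).im
           - 2 * (inner ℂ (χh t) (Matrix.toEuclideanLin μh (ψh' t)) : ℂ).im
           - β * (ε' t + ε t)) := by
  have hIcc : Set.uIcc (0:ℝ) T = Set.Icc 0 T := Set.uIcc_of_le hT.le
  set f1 : ℝ → ℝ := fun t =>
    (ε' t - ε t) * (inner ℂ (χt t) (Matrix.toEuclideanLin μt (ψt' t)) : ℂ).im with hf1
  set f2 : ℝ → ℝ := fun t =>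
    (ε' t - ε t) * (inner ℂ (χh t) (Matrix.toEuclideanLin μh (ψh' t)) : ℂ).im with hf2
  set f3 : ℝ → ℝ := fun t => (ε' t)^2 - (ε t)^2 with hf3
  have hcont : ∀ (μ : Matrix (Fin n) (Fin n) ℂ) (χ ψ' : ℝ → EuclideanSpace ℂ (Fin n)),
      ContinuousOn χ (Set.Icc 0 T) → ContinuousOn ψ' (Set.Icc 0 T) →
      ContinuousOn (fun t => (ε' t - ε t) *
        (inner ℂ (χ t) (Matrix.toEuclideanLin μ (ψ' t)) : ℂ).im) (Set.Icc 0 T) := by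
    intro μ χ ψ' hχc hψ'c
    apply ContinuousOn.mul ((hε'.sub hε).continuousOn)
    exact Complex.continuous_im.comp_continuousOn (ContinuousOn.inner hχc
      ((LinearMap.continuous_of_finiteDimensional _).comp_continuousOn hψ'c))
  have hcχt : ContinuousOn χt (Set.Icc 0 T) :=
    fun t ht => ((hχt.2 t ht).continuousAt).continuousWithinAt
  have hcχh : ContinuousOn χh (Set.Icc 0 T) :=
    fun t ht => ((hχh.2 t ht).continuousAt).continuousWithinAt
  have hcψt' : ContinuousOn ψt' (Set.Icc 0 T) :=
    fun t ht => ((hψt'.2 t ht).continuousAt).continuousWithinAt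
  have hcψh' : ContinuousOn ψh' (Set.Icc 0 T) :=
    fun t ht => ((hψh'.2 t ht).continuousAt).continuousWithinAt
  have hi1 : IntervalIntegrable f1 MeasureTheory.volume 0 T :=
    (by rw [hIcc]; exact hcont μt χt ψt' hcχt hcψt' :
      ContinuousOn f1 (Set.uIcc (0:ℝ) T)).intervalIntegrable
  have hi2 : IntervalIntegrable f2 MeasureTheory.volume 0 T :=
    (by rw [hIcc]; exact hcont μh χh ψh' hcχh hcψh' :
      ContinuousOn f2 (Set.uIcc (0:ℝ) T)).intervalIntegrable
  have hi3 : IntervalIntegrable f3 MeasureTheory.volume 0 T :=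
    (((hε'.pow 2).sub (hε.pow 2)).intervalIntegrable 0 T)
  have hsplit : (∫ t in (0:ℝ)..T, (ε' t - ε t) *
          (2 * (inner ℂ (χt t) (Matrix.toEuclideanLin μt (ψt' t)) : ℂ).im
           - 2 * (inner ℂ (χh t) (Matrix.toEuclideanLin μh (ψh' t)) : ℂ).im
           - β * (ε' t + ε t)))
      = 2 * (∫ t in (0:ℝ)..T, f1 t) - 2 * (∫ t in (0:ℝ)..T, f2 t)
        - β * (∫ t in (0:ℝ)..T, f3 t) := by
    have : (fun t => (ε' t - ε t) *
          (2 * (inner ℂ (χt t) (Matrix.toEuclideanLin μt (ψt' t)) : ℂ).im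
           - 2 * (inner ℂ (χh t) (Matrix.toEuclideanLin μh (ψh' t)) : ℂ).im
           - β * (ε' t + ε t)))
        = fun t => 2 * f1 t - 2 * f2 t - β * f3 t := by
      funext t; simp only [hf1, hf2, hf3]; ring
    rw [intervalIntegral.integral_congr (fun t _ => congrFun this t),
      intervalIntegral.integral_sub (((hi1.const_mul 2).sub (hi2.const_mul 2))) (hi3.const_mul β),
      intervalIntegral.integral_sub (hi1.const_mul 2) (hi2.const_mul 2),
      intervalIntegral.integral_const_mul, intervalIntegral.integral_const_mul,
      intervalIntegral.integral_const_mul]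
  have hI1 : (∫ t in (0:ℝ)..T, f1 t) = (inner ℂ (χt T) (ψt' T - ψt T) : ℂ).re :=
    integral_key hH hμt hT hε hε' hψt hψt' hχt
  have hI2 : (∫ t in (0:ℝ)..T, f2 t) = (inner ℂ (χh T) (ψh' T - ψh T) : ℂ).re :=
    integral_key hH hμh hT hε hε' hψh hψh' hχh
  have hI3 : (∫ t in (0:ℝ)..T, f3 t)
      = (∫ t in (0:ℝ)..T, (ε' t)^2) - (∫ t in (0:ℝ)..T, (ε t)^2) :=
    intervalIntegral.integral_sub ((hε'.pow 2).intervalIntegrable 0 T)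
      ((hε.pow 2).intervalIntegrable 0 T)
  have hcross : (inner ℂ (rankOne ψ₁ (ψt T - ψh T))
        ((ψt' T - ψh' T) - (ψt T - ψh T)) : ℂ).re
      = (inner ℂ (χt T) (ψt' T - ψt T) : ℂ).re - (inner ℂ (χh T) (ψh' T - ψh T) : ℂ).re := by
    rw [show (ψt' T - ψh' T) - (ψt T - ψh T) = (ψt' T - ψt T) - (ψh' T - ψh T) by abel,
      inner_sub_right, Complex.sub_re, hχt.1, hχh.1]
  rw [hsplit, hI1, hI2, hI3]
  have hR := rankOne_expand ψ₁ (ψt' T - ψh' T) (ψt T - ψh T)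
  simp only [Jfun]
  rw [hcross] at hR
  linarith
end
end

section
/- In the setting of the variation identity (controls ε, ε', solutions ψ̃, ψ̂, ψ̃', ψ̂', adjoint states χ̃, χ̂ with terminal condition O_{ψ₁}(ψ̃(T) − ψ̂(T))): if for every t ∈ [0,T] the pointwise inequality (ε'(t) − ε(t)) · ( 2 Im⟨χ̃(t), μ̃ ψ̃'(t)⟩ − 2 Im⟨χ̂(t), μ̂ ψ̂'(t)⟩ − β (ε'(t) + ε(t)) ) ≥ 0 holds, then J(ε') ≥ J(ε), i.e. the new control ε' is at least as selective as ε. -/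
noncomputable section

open Matrix

namespace MonCritAux
variable {n : ℕ}

lemma herm_symm {A : Matrix (Fin n) (Fin n) ℂ} (hA : A.IsHermitian)
    (x y : EuclideanSpace ℂ (Fin n)) :
    (inner ℂ (Matrix.toEuclideanLin A x) y : ℂ) = inner ℂ x (Matrix.toEuclideanLin A y) :=
  (Matrix.isHermitian_iff_isSymmetric.1 hA) x y

lemma deriv_re_inner {H μ : Matrix (Fin n) (Fin n) ℂ} (hH : H.IsHermitian) (hμ : μ.IsHermitian)
    (ε ε₂ : ℝ → ℝ) (χ φ : ℝ → EuclideanSpace ℂ (Fin n)) (t : ℝ)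
    (hχ : HasDerivAt χ ((-Complex.I) • (Matrix.toEuclideanLin (H + (ε t : ℂ) • μ) (χ t))) t)
    (hφ : HasDerivAt φ ((-Complex.I) • (Matrix.toEuclideanLin (H + (ε₂ t : ℂ) • μ) (φ t))) t) :
    HasDerivAt (fun s => (inner ℂ (χ s) (φ s) : ℂ).re)
      ((ε₂ t - ε t) * (inner ℂ (χ t) (Matrix.toEuclideanLin μ (φ t)) : ℂ).im) t := by
  have h1 := hχ.inner ℂ hφ
  have h2 : HasDerivAt (fun s => (inner ℂ (χ s) (φ s) : ℂ).re) _ t :=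
    Complex.reCLM.hasFDerivAt.comp_hasDerivAt t h1
  convert h2 using 1
  have expand : ∀ (c : ℝ) (x : EuclideanSpace ℂ (Fin n)),
      Matrix.toEuclideanLin (H + (c : ℂ) • μ) x
        = Matrix.toEuclideanLin H x + (c : ℂ) • Matrix.toEuclideanLin μ x := by
    intro c x
    simp only [map_add]
    rw [_root_.map_smul]
    rfl
  set a : ℂ := inner ℂ (χ t) (Matrix.toEuclideanLin H (φ t)) with ha
  set m : ℂ := inner ℂ (χ t) (Matrix.toEuclideanLin μ (φ t)) with hm
  have key : (inner ℂ (χ t) ((-Complex.I) • (Matrix.toEuclideanLin (H + (ε₂ t : ℂ) • μ) (φ t))) : ℂ)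
      + (inner ℂ ((-Complex.I) • (Matrix.toEuclideanLin (H + (ε t : ℂ) • μ) (χ t))) (φ t) : ℂ)
      = (-Complex.I) * ((ε₂ t : ℂ) - (ε t : ℂ)) * m := by
    rw [inner_smul_right, inner_smul_left, expand, expand, inner_add_right, inner_add_left,
      inner_smul_right, inner_smul_left, herm_symm hH, herm_symm hμ]
    simp only [← ha, ← hm, Complex.conj_ofReal, map_neg, Complex.conj_I]
    ring
  simp only [Complex.reCLM_apply]
  rw [key]
  simp only [Complex.mul_re, Complex.mul_im, Complex.sub_re, Complex.sub_im,
    Complex.ofReal_re, Complex.ofReal_im, Complex.neg_re, Complex.neg_im, Complex.I_re,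
    Complex.I_im]
  ring


lemma contOn_im {μ : Matrix (Fin n) (Fin n) ℂ} {χ φ : ℝ → EuclideanSpace ℂ (Fin n)} {s : Set ℝ}
    (hχ : ContinuousOn χ s) (hφ : ContinuousOn φ s) :
    ContinuousOn (fun t => (inner ℂ (χ t) (Matrix.toEuclideanLin μ (φ t)) : ℂ).im) s := by
  have hL : Continuous (Matrix.toEuclideanLin μ : EuclideanSpace ℂ (Fin n) →ₗ[ℂ] _) :=
    LinearMap.continuous_of_finiteDimensional _
  exact Complex.continuous_im.comp_continuousOn (hχ.inner (hL.comp_continuousOn hφ))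

lemma ftc_re_inner {T : ℝ} (hT : 0 ≤ T) {H μ : Matrix (Fin n) (Fin n) ℂ}
    (hH : H.IsHermitian) (hμ : μ.IsHermitian)
    {ε ε₂ : ℝ → ℝ} (hε : Continuous ε) (hε₂ : Continuous ε₂)
    {χ φ : ℝ → EuclideanSpace ℂ (Fin n)}
    (hχ : ∀ t ∈ Set.Icc (0:ℝ) T,
      HasDerivAt χ ((-Complex.I) • (Matrix.toEuclideanLin (H + (ε t : ℂ) • μ) (χ t))) t)
    (hφ : ∀ t ∈ Set.Icc (0:ℝ) T,
      HasDerivAt φ ((-Complex.I) • (Matrix.toEuclideanLin (H + (ε₂ t : ℂ) • μ) (φ t))) t) :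
    ∫ t in (0:ℝ)..T, (ε₂ t - ε t) * (inner ℂ (χ t) (Matrix.toEuclideanLin μ (φ t)) : ℂ).im
      = (inner ℂ (χ T) (φ T) : ℂ).re - (inner ℂ (χ 0) (φ 0) : ℂ).re := by
  have huIcc : Set.uIcc (0:ℝ) T = Set.Icc 0 T := Set.uIcc_of_le hT
  apply intervalIntegral.integral_eq_sub_of_hasDerivAt
  · intro t ht; rw [huIcc] at ht
    exact deriv_re_inner hH hμ ε ε₂ χ φ t (hχ t ht) (hφ t ht)
  · apply ContinuousOn.intervalIntegrable
    rw [huIcc]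
    have hχc : ContinuousOn χ (Set.Icc 0 T) :=
      fun t ht => (hχ t ht).continuousAt.continuousWithinAt
    have hφc : ContinuousOn φ (Set.Icc 0 T) :=
      fun t ht => (hφ t ht).continuousAt.continuousWithinAt
    exact ((hε₂.sub hε).continuousOn).mul (contOn_im hχc hφc)

lemma normSq_ineq (u v : ℂ) :
    2 * ((starRingEnd ℂ) v * (u - v)).re ≤ Complex.normSq u - Complex.normSq v := by
  have : Complex.normSq u - Complex.normSq v - 2 * ((starRingEnd ℂ) v * (u - v)).re
      = Complex.normSq (u - v) := by
    simp only [Complex.normSq_apply, Complex.mul_re, Complex.sub_re, Complex.sub_im,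
      Complex.conj_re, Complex.conj_im]
    ring
  nlinarith [Complex.normSq_nonneg (u - v)]

end MonCritAux


/-- if the pointwise monotonicity criterion holds for all `t ∈ [0,T]`,
then `J(ε') ≥ J(ε)`, i.e. the new control `ε'` is at least as selective as `ε`. -/
theorem monotonicity_criterion {n : ℕ} (T β : ℝ) (hT : 0 < T) (hβ : 0 < β)
    (H : Matrix (Fin n) (Fin n) ℂ) (hH : H.IsHermitian)
    (ψ₀ ψ₁ : EuclideanSpace ℂ (Fin n)) (hψ₀ : ‖ψ₀‖ = 1) (hψ₁ : ‖ψ₁‖ = 1)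
    (μt μh : Matrix (Fin n) (Fin n) ℂ) (hμt : μt.IsHermitian) (hμh : μh.IsHermitian)
    (ε ε' : ℝ → ℝ) (hε : Continuous ε) (hε' : Continuous ε')
    (ψt ψh ψt' ψh' : ℝ → EuclideanSpace ℂ (Fin n))
    (hψt : IsSchrodSol H μt ε ψ₀ T ψt) (hψh : IsSchrodSol H μh ε ψ₀ T ψh)
    (hψt' : IsSchrodSol H μt ε' ψ₀ T ψt') (hψh' : IsSchrodSol H μh ε' ψ₀ T ψh')
    (χt χh : ℝ → EuclideanSpace ℂ (Fin n))
    (hχt : IsSchrodAdjSol H μt ε (rankOne ψ₁ (ψt T - ψh T)) T χt)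
    (hχh : IsSchrodAdjSol H μh ε (rankOne ψ₁ (ψt T - ψh T)) T χh)
    (hpointwise : ∀ t ∈ Set.Icc (0 : ℝ) T,
      0 ≤ (ε' t - ε t) *
          (2 * (inner ℂ (χt t) (Matrix.toEuclideanLin μt (ψt' t)) : ℂ).im
           - 2 * (inner ℂ (χh t) (Matrix.toEuclideanLin μh (ψh' t)) : ℂ).im
           - β * (ε' t + ε t))) :
    Jfun T β ψ₁ ε ψt ψh ≤ Jfun T β ψ₁ ε' ψt' ψh' := by
  classical
  obtain ⟨hψt0, hψtD⟩ := hψt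
  obtain ⟨hψh0, hψhD⟩ := hψh
  obtain ⟨hψt'0, hψt'D⟩ := hψt'
  obtain ⟨hψh'0, hψh'D⟩ := hψh'
  obtain ⟨hχtT, hχtD⟩ := hχt
  obtain ⟨hχhT, hχhD⟩ := hχh
  have hT0 : (0:ℝ) ≤ T := hT.le
  have huIcc : Set.uIcc (0:ℝ) T = Set.Icc 0 T := Set.uIcc_of_le hT0
  -- continuity of the states on [0,T]
  have hχtc : ContinuousOn χt (Set.Icc 0 T) :=
    fun t ht => (hχtD t ht).continuousAt.continuousWithinAt
  have hχhc : ContinuousOn χh (Set.Icc 0 T) :=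
    fun t ht => (hχhD t ht).continuousAt.continuousWithinAt
  have hψt'c : ContinuousOn ψt' (Set.Icc 0 T) :=
    fun t ht => (hψt'D t ht).continuousAt.continuousWithinAt
  have hψh'c : ContinuousOn ψh' (Set.Icc 0 T) :=
    fun t ht => (hψh'D t ht).continuousAt.continuousWithinAt
  -- FTC identities
  have A1 := MonCritAux.ftc_re_inner hT0 hH hμt hε hε' hχtD hψt'D
  have A2 := MonCritAux.ftc_re_inner hT0 hH hμt hε hε hχtD hψtD
  have A3 := MonCritAux.ftc_re_inner hT0 hH hμh hε hε' hχhD hψh'D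
  have A4 := MonCritAux.ftc_re_inner hT0 hH hμh hε hε hχhD hψhD
  simp only [sub_self, zero_mul, intervalIntegral.integral_zero] at A2 A4
  set I1 : ℝ := ∫ t in (0:ℝ)..T,
      (ε' t - ε t) * (inner ℂ (χt t) (Matrix.toEuclideanLin μt (ψt' t)) : ℂ).im with hI1
  set I2 : ℝ := ∫ t in (0:ℝ)..T,
      (ε' t - ε t) * (inner ℂ (χh t) (Matrix.toEuclideanLin μh (ψh' t)) : ℂ).im with hI2
  set b : EuclideanSpace ℂ (Fin n) := ψt T - ψh T with hb
  set a : EuclideanSpace ℂ (Fin n) := ψt' T - ψh' T with hadef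
  set cb : ℂ := inner ℂ ψ₁ b with hcb
  set ca : ℂ := inner ℂ ψ₁ a with hca
  -- J values
  have hJre : ∀ x : EuclideanSpace ℂ (Fin n),
      (inner ℂ x (rankOne ψ₁ x) : ℂ).re = Complex.normSq (inner ℂ ψ₁ x : ℂ) := by
    intro x
    rw [rankOne, inner_smul_right, ← inner_conj_symm x ψ₁, Complex.mul_conj]
    simp
  -- the rank-one inner ℂ products
  have hrank : ∀ y : EuclideanSpace ℂ (Fin n),
      (inner ℂ (rankOne ψ₁ b) y : ℂ) = (starRingEnd ℂ) cb * (inner ℂ ψ₁ y : ℂ) := by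
    intro y
    rw [rankOne, inner_smul_left]
  -- key real part identity at time T
  have hreT : ((starRingEnd ℂ) cb * (ca - cb)).re = I1 - I2 := by
    have h1 : ((starRingEnd ℂ) cb * (ca - cb)) = inner ℂ (rankOne ψ₁ b) (a - b) := by
      rw [hrank (a - b), inner_sub_right]
    have h2 : a - b = (ψt' T - ψt T) - (ψh' T - ψh T) := by
      rw [hadef, hb]; abel
    rw [h1, h2, inner_sub_right, inner_sub_right, inner_sub_right]
    have e1 : (inner ℂ (rankOne ψ₁ b) (ψt' T) : ℂ).re - (inner ℂ (rankOne ψ₁ b) (ψt T) : ℂ).re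
        = I1 := by
      rw [← hχtT]
      rw [hψt'0] at A1
      rw [hψt0] at A2
      linarith [A1, A2]
    have e2 : (inner ℂ (rankOne ψ₁ b) (ψh' T) : ℂ).re - (inner ℂ (rankOne ψ₁ b) (ψh T) : ℂ).re
        = I2 := by
      rw [← hχhT]
      rw [hψh'0] at A3
      rw [hψh0] at A4
      linarith [A3, A4]
    simp only [Complex.sub_re]
    linarith [e1, e2]
  -- quadratic inequality
  have hquad : 2 * ((starRingEnd ℂ) cb * (ca - cb)).re
      ≤ Complex.normSq ca - Complex.normSq cb := MonCritAux.normSq_ineq ca cb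
  -- integrability
  have hIe : IntervalIntegrable (fun t => (ε t) ^ 2) MeasureTheory.volume 0 T :=
    (hε.pow 2).intervalIntegrable 0 T
  have hIe' : IntervalIntegrable (fun t => (ε' t) ^ 2) MeasureTheory.volume 0 T :=
    (hε'.pow 2).intervalIntegrable 0 T
  have hIg1 : IntervalIntegrable (fun t =>
      (ε' t - ε t) * (inner ℂ (χt t) (Matrix.toEuclideanLin μt (ψt' t)) : ℂ).im)
      MeasureTheory.volume 0 T := by
    apply ContinuousOn.intervalIntegrable
    rw [huIcc]
    exact ((hε'.sub hε).continuousOn).mul (MonCritAux.contOn_im hχtc hψt'c)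
  have hIg2 : IntervalIntegrable (fun t =>
      (ε' t - ε t) * (inner ℂ (χh t) (Matrix.toEuclideanLin μh (ψh' t)) : ℂ).im)
      MeasureTheory.volume 0 T := by
    apply ContinuousOn.intervalIntegrable
    rw [huIcc]
    exact ((hε'.sub hε).continuousOn).mul (MonCritAux.contOn_im hχhc hψh'c)
  have hIg3 : IntervalIntegrable (fun t => (ε' t) ^ 2 - (ε t) ^ 2)
      MeasureTheory.volume 0 T := hIe'.sub hIe
  -- the main integral
  have hFval : (∫ t in (0:ℝ)..T, (ε' t - ε t) *
        (2 * (inner ℂ (χt t) (Matrix.toEuclideanLin μt (ψt' t)) : ℂ).im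
          - 2 * (inner ℂ (χh t) (Matrix.toEuclideanLin μh (ψh' t)) : ℂ).im
          - β * (ε' t + ε t)))
      = 2 * I1 - 2 * I2 - β * ((∫ t in (0:ℝ)..T, (ε' t) ^ 2) - ∫ t in (0:ℝ)..T, (ε t) ^ 2) := by
    have hptw : ∀ t : ℝ, (ε' t - ε t) *
        (2 * (inner ℂ (χt t) (Matrix.toEuclideanLin μt (ψt' t)) : ℂ).im
          - 2 * (inner ℂ (χh t) (Matrix.toEuclideanLin μh (ψh' t)) : ℂ).im
          - β * (ε' t + ε t))
        = 2 * ((ε' t - ε t) * (inner ℂ (χt t) (Matrix.toEuclideanLin μt (ψt' t)) : ℂ).im)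
          - 2 * ((ε' t - ε t) * (inner ℂ (χh t) (Matrix.toEuclideanLin μh (ψh' t)) : ℂ).im)
          - β * ((ε' t) ^ 2 - (ε t) ^ 2) := by
      intro t; ring
    rw [intervalIntegral.integral_congr (fun t _ => hptw t)]
    rw [intervalIntegral.integral_sub ((hIg1.const_mul 2).sub (hIg2.const_mul 2))
        (hIg3.const_mul β),
      intervalIntegral.integral_sub (hIg1.const_mul 2) (hIg2.const_mul 2),
      intervalIntegral.integral_const_mul, intervalIntegral.integral_const_mul,
      intervalIntegral.integral_const_mul,
      intervalIntegral.integral_sub hIe' hIe]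
  have hFpos : (0:ℝ) ≤ ∫ t in (0:ℝ)..T, (ε' t - ε t) *
        (2 * (inner ℂ (χt t) (Matrix.toEuclideanLin μt (ψt' t)) : ℂ).im
          - 2 * (inner ℂ (χh t) (Matrix.toEuclideanLin μh (ψh' t)) : ℂ).im
          - β * (ε' t + ε t)) :=
    intervalIntegral.integral_nonneg hT0 (fun u hu => hpointwise u hu)
  have hJ' : Jfun T β ψ₁ ε' ψt' ψh' = Complex.normSq ca - β * ∫ t in (0:ℝ)..T, (ε' t) ^ 2 := by
    rw [Jfun, hJre]
  have hJ : Jfun T β ψ₁ ε ψt ψh = Complex.normSq cb - β * ∫ t in (0:ℝ)..T, (ε t) ^ 2 := by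
    rw [Jfun, hJre]
  rw [hJ, hJ']
  rw [hFval] at hFpos
  linarith [hquad, hreT, hFpos]
end
end

section
/- In the setting of the variation identity, let θ > 0 and suppose the new control ε' satisfies, for all t ∈ [0,T], the implicit update equation ε'(t) − ε(t) = (θ/β) · ( 2 Im⟨χ̃(t), μ̃ ψ̃'(t)⟩ − 2 Im⟨χ̂(t), μ̂ ψ̂'(t)⟩ − β (ε'(t) + ε(t)) ). Then J(ε') − J(ε) = ⟨δψ'(T) − δψ(T), O_{ψ₁}(δψ'(T) − δψ(T))⟩ + (β/θ) ∫₀ᵀ (ε'(t) − ε(t))² dt, and in particular J(ε') ≥ J(ε). -/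
noncomputable section

open Matrix

lemma adjoint_key {n : ℕ} {T : ℝ} (hT : 0 < T)
    {H μ : Matrix (Fin n) (Fin n) ℂ} (hH : H.IsHermitian) (hμ : μ.IsHermitian)
    {ε ε' : ℝ → ℝ} (hε : Continuous ε) (hε' : Continuous ε')
    {ψ₀ χT : EuclideanSpace ℂ (Fin n)}
    {ψ ψ' χ : ℝ → EuclideanSpace ℂ (Fin n)}
    (hψ : IsSchrodSol H μ ε ψ₀ T ψ) (hψ' : IsSchrodSol H μ ε' ψ₀ T ψ')
    (hχ : IsSchrodAdjSol H μ ε χT T χ) :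
    (inner ℂ (χ T) (ψ' T - ψ T) : ℂ).re =
      ∫ t in (0:ℝ)..T, (ε' t - ε t) * (inner ℂ (χ t) (Matrix.toEuclideanLin μ (ψ' t)) : ℂ).im := by
  set F : ℝ → ℝ := fun t => (ε' t - ε t) * (inner ℂ (χ t) (Matrix.toEuclideanLin μ (ψ' t)) : ℂ).im with hF
  have hχc : ContinuousOn χ (Set.Icc 0 T) := fun t ht => ((hχ.2 t ht).continuousAt).continuousWithinAt
  have hψ'c : ContinuousOn ψ' (Set.Icc 0 T) := fun t ht => ((hψ'.2 t ht).continuousAt).continuousWithinAt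
  have hMc : Continuous (Matrix.toEuclideanLin μ) :=
    LinearMap.continuous_of_finiteDimensional _
  have hFc : ContinuousOn F (Set.Icc 0 T) := by
    apply ContinuousOn.mul ((hε'.sub hε).continuousOn)
    exact Complex.continuous_im.comp_continuousOn (hχc.inner (hMc.comp_continuousOn hψ'c))
  have hderiv : ∀ t ∈ Set.uIcc (0:ℝ) T, HasDerivAt (fun s => (inner ℂ (χ s) (ψ' s - ψ s) : ℂ).re) (F t) t := by
    rw [Set.uIcc_of_le hT.le]
    intro t ht
    have h1 := hψ.2 t ht
    have h2 := hψ'.2 t ht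
    have h3 := hχ.2 t ht
    have hd := h3.inner (𝕜 := ℂ) (h2.sub h1)
    have := Complex.reCLM.hasFDerivAt.comp_hasDerivAt t hd
    refine this.congr_deriv (Eq.symm ?_)
    -- algebra
    have hA : (H + ((ε t : ℝ) : ℂ) • μ).IsHermitian := by
      simp [Matrix.IsHermitian, Matrix.conjTranspose_add, Matrix.conjTranspose_smul, hH.eq,
        hμ.eq, Complex.star_def, Complex.conj_ofReal]
    have hS := Matrix.isHermitian_iff_isSymmetric.mp hA
    have e1 : Matrix.toEuclideanLin (H + ((ε' t : ℝ) : ℂ) • μ) (ψ' t)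
        = Matrix.toEuclideanLin (H + ((ε t : ℝ) : ℂ) • μ) (ψ' t)
          + (((ε' t - ε t : ℝ)) : ℂ) • (Matrix.toEuclideanLin μ (ψ' t)) := by
      rw [map_add, map_add, _root_.map_smul, _root_.map_smul]
      simp only [LinearMap.add_apply, LinearMap.smul_apply]
      rw [Complex.ofReal_sub, sub_smul]
      abel
    rw [e1]
    simp only [inner_sub_right, inner_add_right, inner_smul_right, inner_smul_left,
      Complex.reCLM_apply, Pi.sub_apply]
    rw [hS (χ t) (ψ' t), hS (χ t) (ψ t)]
    simp only [map_neg, Complex.conj_I, hF, Complex.add_re, Complex.sub_re, Complex.neg_re,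
      Complex.mul_re, Complex.mul_im, Complex.I_re, Complex.I_im, Complex.neg_im,
      Complex.ofReal_re, Complex.ofReal_im, Complex.add_im, Complex.sub_im]
    ring
  have hint : IntervalIntegrable F MeasureTheory.volume 0 T := by
    apply ContinuousOn.intervalIntegrable
    rwa [Set.uIcc_of_le hT.le]
  have := intervalIntegral.integral_eq_sub_of_hasDerivAt hderiv hint
  have h0 : (inner ℂ (χ 0) (ψ' 0 - ψ 0) : ℂ).re = 0 := by
    rw [hψ'.1, hψ.1]; simp
  rw [this, h0, sub_zero]

/-- if the new control `ε'` satisfies the implicit update equation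
`ε'(t) − ε(t) = (θ/β)(2 Im⟨χ̃,μ̃ψ̃'⟩ − 2 Im⟨χ̂,μ̂ψ̂'⟩ − β(ε'(t)+ε(t)))` on `[0,T]`,
then `J(ε') − J(ε) = ⟨δψ'(T)−δψ(T), O(δψ'(T)−δψ(T))⟩ + (β/θ)∫₀ᵀ(ε'−ε)²`, and in
particular `J(ε') ≥ J(ε)`. -/
theorem implicit_update_monotonic {n : ℕ} (T β θ : ℝ) (hT : 0 < T) (hβ : 0 < β)
    (hθ : 0 < θ)
    (H : Matrix (Fin n) (Fin n) ℂ) (hH : H.IsHermitian)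
    (ψ₀ ψ₁ : EuclideanSpace ℂ (Fin n)) (hψ₀ : ‖ψ₀‖ = 1) (hψ₁ : ‖ψ₁‖ = 1)
    (μt μh : Matrix (Fin n) (Fin n) ℂ) (hμt : μt.IsHermitian) (hμh : μh.IsHermitian)
    (ε ε' : ℝ → ℝ) (hε : Continuous ε) (hε' : Continuous ε')
    (ψt ψh ψt' ψh' : ℝ → EuclideanSpace ℂ (Fin n))
    (hψt : IsSchrodSol H μt ε ψ₀ T ψt) (hψh : IsSchrodSol H μh ε ψ₀ T ψh)
    (hψt' : IsSchrodSol H μt ε' ψ₀ T ψt') (hψh' : IsSchrodSol H μh ε' ψ₀ T ψh')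
    (χt χh : ℝ → EuclideanSpace ℂ (Fin n))
    (hχt : IsSchrodAdjSol H μt ε (rankOne ψ₁ (ψt T - ψh T)) T χt)
    (hχh : IsSchrodAdjSol H μh ε (rankOne ψ₁ (ψt T - ψh T)) T χh)
    (hupdate : ∀ t ∈ Set.Icc (0 : ℝ) T,
      ε' t - ε t = (θ / β) *
          (2 * (inner ℂ (χt t) (Matrix.toEuclideanLin μt (ψt' t)) : ℂ).im
           - 2 * (inner ℂ (χh t) (Matrix.toEuclideanLin μh (ψh' t)) : ℂ).im
           - β * (ε' t + ε t))) :
    (Jfun T β ψ₁ ε' ψt' ψh' - Jfun T β ψ₁ ε ψt ψh =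
      (inner ℂ ((ψt' T - ψh' T) - (ψt T - ψh T))
        (rankOne ψ₁ ((ψt' T - ψh' T) - (ψt T - ψh T))) : ℂ).re
      + (β / θ) * ∫ t in (0:ℝ)..T, (ε' t - ε t) ^ 2) ∧
    Jfun T β ψ₁ ε ψt ψh ≤ Jfun T β ψ₁ ε' ψt' ψh' := by
  have hO : ∀ x : EuclideanSpace ℂ (Fin n),
      (inner ℂ x (rankOne ψ₁ x) : ℂ).re = Complex.normSq (inner ℂ ψ₁ x : ℂ) := by
    intro x
    simp only [rankOne]
    rw [inner_smul_right, ← inner_conj_symm x ψ₁, Complex.mul_conj]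
    simp
  have heq : Jfun T β ψ₁ ε' ψt' ψh' - Jfun T β ψ₁ ε ψt ψh =
      (inner ℂ ((ψt' T - ψh' T) - (ψt T - ψh T))
        (rankOne ψ₁ ((ψt' T - ψh' T) - (ψt T - ψh T))) : ℂ).re
      + (β / θ) * ∫ t in (0:ℝ)..T, (ε' t - ε t) ^ 2 := by
    simp only [Jfun]
    set fa : ℂ := inner ℂ ψ₁ (ψt' T - ψh' T) with hfa
    set fb : ℂ := inner ℂ ψ₁ (ψt T - ψh T) with hfb
    set gt : ℂ := inner ℂ ψ₁ (ψt' T - ψt T) with hgt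
    set gh : ℂ := inner ℂ ψ₁ (ψh' T - ψh T) with hgh
    have keyt := adjoint_key hT hH hμt hε hε' hψt hψt' hχt
    have keyh := adjoint_key hT hH hμh hε hε' hψh hψh' hχh
    -- rank one rewrites
    have hab : (fa - fb) = gt - gh := by
      simp only [hfa, hfb, hgt, hgh, inner_sub_right]; ring
    have ht1 : (inner ℂ (χt T) (ψt' T - ψt T) : ℂ).re = ((starRingEnd ℂ) fb * gt).re := by
      rw [hχt.1, hfb, hgt]; simp only [rankOne]; rw [inner_smul_left]
    have ht2 : (inner ℂ (χh T) (ψh' T - ψh T) : ℂ).re = ((starRingEnd ℂ) fb * gh).re := by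
      rw [hχh.1, hfb, hgh]; simp only [rankOne]; rw [inner_smul_left]
    -- integrability
    have hχtc : ContinuousOn χt (Set.Icc 0 T) := fun t ht => ((hχt.2 t ht).continuousAt).continuousWithinAt
    have hχhc : ContinuousOn χh (Set.Icc 0 T) := fun t ht => ((hχh.2 t ht).continuousAt).continuousWithinAt
    have hψt'c : ContinuousOn ψt' (Set.Icc 0 T) := fun t ht => ((hψt'.2 t ht).continuousAt).continuousWithinAt
    have hψh'c : ContinuousOn ψh' (Set.Icc 0 T) := fun t ht => ((hψh'.2 t ht).continuousAt).continuousWithinAt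
    have hMtc : Continuous (Matrix.toEuclideanLin μt) := LinearMap.continuous_of_finiteDimensional _
    have hMhc : Continuous (Matrix.toEuclideanLin μh) := LinearMap.continuous_of_finiteDimensional _
    have hi1 : IntervalIntegrable
        (fun t => (ε' t - ε t) * (inner ℂ (χt t) (Matrix.toEuclideanLin μt (ψt' t)) : ℂ).im)
        MeasureTheory.volume 0 T := by
      apply ContinuousOn.intervalIntegrable
      rw [Set.uIcc_of_le hT.le]
      exact ((hε'.sub hε).continuousOn).mul
        (Complex.continuous_im.comp_continuousOn (hχtc.inner (hMtc.comp_continuousOn hψt'c)))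
    have hi2 : IntervalIntegrable
        (fun t => (ε' t - ε t) * (inner ℂ (χh t) (Matrix.toEuclideanLin μh (ψh' t)) : ℂ).im)
        MeasureTheory.volume 0 T := by
      apply ContinuousOn.intervalIntegrable
      rw [Set.uIcc_of_le hT.le]
      exact ((hε'.sub hε).continuousOn).mul
        (Complex.continuous_im.comp_continuousOn (hχhc.inner (hMhc.comp_continuousOn hψh'c)))
    have hisq : IntervalIntegrable (fun t => (ε' t - ε t)^2) MeasureTheory.volume 0 T :=
      ((hε'.sub hε).pow 2).intervalIntegrable 0 T
    have hiε : IntervalIntegrable (fun t => (ε t)^2) MeasureTheory.volume 0 T :=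
      (hε.pow 2).intervalIntegrable 0 T
    have hiε' : IntervalIntegrable (fun t => (ε' t)^2) MeasureTheory.volume 0 T :=
      (hε'.pow 2).intervalIntegrable 0 T
    -- cross term
    have hYt : ((starRingEnd ℂ) fb * gt).re
        = ∫ t in (0:ℝ)..T, (ε' t - ε t) * (inner ℂ (χt t) (Matrix.toEuclideanLin μt (ψt' t)) : ℂ).im :=
      ht1.symm.trans keyt
    have hYh : ((starRingEnd ℂ) fb * gh).re
        = ∫ t in (0:ℝ)..T, (ε' t - ε t) * (inner ℂ (χh t) (Matrix.toEuclideanLin μh (ψh' t)) : ℂ).im :=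
      ht2.symm.trans keyh
    have hcross : 2 * ((starRingEnd ℂ) fb * gt).re - 2 * ((starRingEnd ℂ) fb * gh).re =
        (β/θ) * (∫ t in (0:ℝ)..T, (ε' t - ε t) ^ 2)
          + β * (∫ t in (0:ℝ)..T, (ε' t)^2) - β * ∫ t in (0:ℝ)..T, (ε t)^2 := by
      rw [hYt, hYh, ← intervalIntegral.integral_const_mul, ← intervalIntegral.integral_const_mul,
        ← intervalIntegral.integral_sub (hi1.const_mul 2) (hi2.const_mul 2),
        ← intervalIntegral.integral_const_mul, ← intervalIntegral.integral_const_mul,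
        ← intervalIntegral.integral_const_mul,
        ← intervalIntegral.integral_add (hisq.const_mul _) (hiε'.const_mul _),
        ← intervalIntegral.integral_sub ((hisq.const_mul _).add (hiε'.const_mul _))
          (hiε.const_mul _)]
      apply intervalIntegral.integral_congr
      intro t ht
      rw [Set.uIcc_of_le hT.le] at ht
      have h := hupdate t ht
      have hs : 2 * (inner ℂ (χt t) (Matrix.toEuclideanLin μt (ψt' t)) : ℂ).im
          - 2 * (inner ℂ (χh t) (Matrix.toEuclideanLin μh (ψh' t)) : ℂ).im
          = (β/θ) * (ε' t - ε t) + β * (ε' t + ε t) := by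
        field_simp at h ⊢
        linarith
      have h2 : 2 * ((ε' t - ε t) * (inner ℂ (χt t) (Matrix.toEuclideanLin μt (ψt' t)) : ℂ).im)
          - 2 * ((ε' t - ε t) * (inner ℂ (χh t) (Matrix.toEuclideanLin μh (ψh' t)) : ℂ).im)
          = (ε' t - ε t) * (2 * (inner ℂ (χt t) (Matrix.toEuclideanLin μt (ψt' t)) : ℂ).im
              - 2 * (inner ℂ (χh t) (Matrix.toEuclideanLin μh (ψh' t)) : ℂ).im) := by ring
      simp only [h2, hs]
      ring
    -- quadratic identity
    have hquad : Complex.normSq fa - Complex.normSq fb =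
        Complex.normSq (fa - fb) + 2 * ((starRingEnd ℂ) fb * (fa - fb)).re := by
      simp only [Complex.normSq_apply, Complex.mul_re, Complex.sub_re, Complex.sub_im,
        Complex.conj_re, Complex.conj_im]
      ring
    have hsplit : ((starRingEnd ℂ) fb * (fa - fb)).re
        = ((starRingEnd ℂ) fb * gt).re - ((starRingEnd ℂ) fb * gh).re := by
      rw [hab]
      simp only [mul_sub, Complex.sub_re]
    have hD : (inner ℂ ψ₁ (ψt' T - ψh' T - (ψt T - ψh T)) : ℂ) = fa - fb := by
      rw [hfa, hfb]; exact inner_sub_right _ _ _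
    rw [hO, hO, hO, congrArg Complex.normSq hD, ← hfa, ← hfb]
    linarith [hquad, hsplit, hcross]
  refine ⟨heq, ?_⟩
  have h1 : 0 ≤ (inner ℂ ((ψt' T - ψh' T) - (ψt T - ψh T))
      (rankOne ψ₁ ((ψt' T - ψh' T) - (ψt T - ψh T))) : ℂ).re := by
    rw [hO]; exact Complex.normSq_nonneg _
  have h2 : 0 ≤ (β / θ) * ∫ t in (0:ℝ)..T, (ε' t - ε t) ^ 2 :=
    mul_nonneg (div_nonneg hβ.le hθ.le)
      (intervalIntegral.integral_nonneg hT.le (fun u _ => sq_nonneg _))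
  linarith
end
end

section
/- Let (ε_ℓ)_{ℓ ≥ 0} be a sequence of continuous controls such that for each ℓ the pair (ε_ℓ, ε_{ℓ+1}) satisfies the implicit monotonic update equation ε_{ℓ+1}(t) − ε_ℓ(t) = (θ/β) · ( 2 Im⟨χ̃_ℓ(t), μ̃ ψ̃_{ℓ+1}(t)⟩ − 2 Im⟨χ̂_ℓ(t), μ̂ ψ̂_{ℓ+1}(t)⟩ − β (ε_{ℓ+1}(t) + ε_ℓ(t)) ) for all t ∈ [0,T], with θ > 0. Then the sequence (J(ε_ℓ))_{ℓ ≥ 0} is nondecreasing; since it is also bounded above (by 4), it converges. -/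
noncomputable section

open Matrix

section Aux
variable {n : ℕ}
local notation "E" => EuclideanSpace ℂ (Fin n)

lemma selfadj_inner (M : Matrix (Fin n) (Fin n) ℂ) (hM : M.IsHermitian)
    (x y : E) : (inner ℂ (toEuclideanLin M x) y : ℂ) = inner ℂ x (toEuclideanLin M y) := by
  have h := Matrix.toEuclideanLin_conjTranspose_eq_adjoint M
  rw [hM.eq] at h
  conv_lhs => rw [h]
  rw [LinearMap.adjoint_inner_left]

lemma pairing_deriv (A B : Matrix (Fin n) (Fin n) ℂ) (hA : A.IsHermitian)
    (χ ψ : ℝ → E) (t : ℝ)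
    (hχ : HasDerivAt χ ((-Complex.I) • (toEuclideanLin A (χ t))) t)
    (hψ : HasDerivAt ψ ((-Complex.I) • (toEuclideanLin B (ψ t))) t) :
    HasDerivAt (fun s => (inner ℂ (χ s) (ψ s) : ℂ))
      ((-Complex.I) * (inner ℂ (χ t) (toEuclideanLin (B - A) (ψ t)) : ℂ)) t := by
  have h := hχ.inner ℂ hψ
  refine h.congr_deriv ?_
  rw [inner_smul_right, inner_smul_left, selfadj_inner A hA, map_sub, LinearMap.sub_apply,
    inner_sub_right, map_neg, Complex.conj_I]
  ring

lemma herm_add_smul (H μ : Matrix (Fin n) (Fin n) ℂ) (hH : H.IsHermitian)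
    (hμ : μ.IsHermitian) (c : ℝ) : (H + (c : ℂ) • μ).IsHermitian := by
  refine hH.add ?_
  unfold Matrix.IsHermitian
  rw [Matrix.conjTranspose_smul, hμ.eq]
  simp

lemma pairing_integral (T : ℝ) (hT : 0 ≤ T) (H μ : Matrix (Fin n) (Fin n) ℂ)
    (hH : H.IsHermitian) (hμ : μ.IsHermitian)
    (ε₁ ε₂ : ℝ → ℝ) (hε₁ : Continuous ε₁) (hε₂ : Continuous ε₂) (χ ψ : ℝ → E)
    (hχ : ∀ t ∈ Set.Icc (0:ℝ) T,
      HasDerivAt χ ((-Complex.I) • (toEuclideanLin (H + (ε₁ t : ℂ) • μ) (χ t))) t)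
    (hψ : ∀ t ∈ Set.Icc (0:ℝ) T,
      HasDerivAt ψ ((-Complex.I) • (toEuclideanLin (H + (ε₂ t : ℂ) • μ) (ψ t))) t) :
    (inner ℂ (χ T) (ψ T) : ℂ).re - (inner ℂ (χ 0) (ψ 0) : ℂ).re
      = ∫ t in (0:ℝ)..T, (ε₂ t - ε₁ t) * (inner ℂ (χ t) (toEuclideanLin μ (ψ t)) : ℂ).im := by
  have hχc : ContinuousOn χ (Set.Icc 0 T) :=
    fun t ht => ((hχ t ht).continuousAt).continuousWithinAt
  have hψc : ContinuousOn ψ (Set.Icc 0 T) :=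
    fun t ht => ((hψ t ht).continuousAt).continuousWithinAt
  have hμcont : Continuous (toEuclideanLin μ) := LinearMap.continuous_of_finiteDimensional _
  have hgc : ContinuousOn
      (fun t => (ε₂ t - ε₁ t) * (inner ℂ (χ t) (toEuclideanLin μ (ψ t)) : ℂ).im)
      (Set.Icc 0 T) := by
    exact ((hε₂.sub hε₁).continuousOn).mul
      (Complex.continuous_im.comp_continuousOn (hχc.inner (hμcont.comp_continuousOn hψc)))
  have hderiv : ∀ t ∈ Set.Icc (0:ℝ) T,
      HasDerivAt (fun s => (inner ℂ (χ s) (ψ s) : ℂ).re)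
        ((ε₂ t - ε₁ t) * (inner ℂ (χ t) (toEuclideanLin μ (ψ t)) : ℂ).im) t := by
    intro t ht
    have hc := pairing_deriv (H + (ε₁ t : ℂ) • μ) (H + (ε₂ t : ℂ) • μ)
      (herm_add_smul H μ hH hμ _) χ ψ t (hχ t ht) (hψ t ht)
    have hre := (Complex.reCLM.hasFDerivAt).comp_hasDerivAt t hc
    refine hre.congr_deriv ?_
    have hBA : (H + (ε₂ t : ℂ) • μ) - (H + (ε₁ t : ℂ) • μ) = ((ε₂ t - ε₁ t : ℝ) : ℂ) • μ := by
      push_cast; rw [add_sub_add_left_eq_sub, ← sub_smul]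
    rw [hBA, _root_.map_smul]
    simp only [LinearMap.smul_apply, inner_smul_right, Complex.reCLM_apply]
    simp [Complex.mul_re, Complex.mul_im]
  have hint : ∫ t in (0:ℝ)..T, (ε₂ t - ε₁ t) * (inner ℂ (χ t) (toEuclideanLin μ (ψ t)) : ℂ).im
      = (inner ℂ (χ T) (ψ T) : ℂ).re - (inner ℂ (χ 0) (ψ 0) : ℂ).re := by
    apply intervalIntegral.integral_eq_sub_of_hasDerivAt
    · intro t ht
      rw [Set.uIcc_of_le hT] at ht
      exact hderiv t ht
    · exact (hgc.mono (by rw [Set.uIcc_of_le hT])).intervalIntegrable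
  linarith [hint]

lemma norm_preserved (T : ℝ) (hT : 0 ≤ T) (H μ : Matrix (Fin n) (Fin n) ℂ)
    (hH : H.IsHermitian) (hμ : μ.IsHermitian)
    (ε : ℝ → ℝ) (hε : Continuous ε) (ψ : ℝ → E)
    (hψ : ∀ t ∈ Set.Icc (0:ℝ) T,
      HasDerivAt ψ ((-Complex.I) • (toEuclideanLin (H + (ε t : ℂ) • μ) (ψ t))) t) :
    ‖ψ T‖ = ‖ψ 0‖ := by
  have h := pairing_integral T hT H μ hH hμ ε ε hε hε ψ ψ hψ hψ
  simp only [sub_self, zero_mul, intervalIntegral.integral_zero] at h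
  have h1 : (inner ℂ (ψ T) (ψ T) : ℂ).re = ‖ψ T‖ ^ 2 := by
    rw [← inner_self_eq_norm_sq (𝕜 := ℂ) (ψ T)]; rfl
  have h2 : (inner ℂ (ψ 0) (ψ 0) : ℂ).re = ‖ψ 0‖ ^ 2 := by
    rw [← inner_self_eq_norm_sq (𝕜 := ℂ) (ψ 0)]; rfl
  have : ‖ψ T‖ ^ 2 = ‖ψ 0‖ ^ 2 := by rw [← h1, ← h2]; linarith
  nlinarith [norm_nonneg (ψ T), norm_nonneg (ψ 0)]

end Aux

/-- if consecutive controls in the sequence `(ε_ℓ)` satisfy the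
implicit monotonic update equation, then `(J(ε_ℓ))` is nondecreasing, bounded
above by `4`, and hence converges. -/
theorem monotonic_scheme_converges {n : ℕ} (T β θ : ℝ) (hT : 0 < T) (hβ : 0 < β)
    (hθ : 0 < θ)
    (H : Matrix (Fin n) (Fin n) ℂ) (hH : H.IsHermitian)
    (ψ₀ ψ₁ : EuclideanSpace ℂ (Fin n)) (hψ₀ : ‖ψ₀‖ = 1) (hψ₁ : ‖ψ₁‖ = 1)
    (μt μh : Matrix (Fin n) (Fin n) ℂ) (hμt : μt.IsHermitian) (hμh : μh.IsHermitian)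
    (ε : ℕ → ℝ → ℝ) (hε : ∀ ℓ, Continuous (ε ℓ))
    (ψt ψh : ℕ → ℝ → EuclideanSpace ℂ (Fin n))
    (hψt : ∀ ℓ, IsSchrodSol H μt (ε ℓ) ψ₀ T (ψt ℓ))
    (hψh : ∀ ℓ, IsSchrodSol H μh (ε ℓ) ψ₀ T (ψh ℓ))
    (χt χh : ℕ → ℝ → EuclideanSpace ℂ (Fin n))
    (hχt : ∀ ℓ, IsSchrodAdjSol H μt (ε ℓ) (rankOne ψ₁ (ψt ℓ T - ψh ℓ T)) T (χt ℓ))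
    (hχh : ∀ ℓ, IsSchrodAdjSol H μh (ε ℓ) (rankOne ψ₁ (ψt ℓ T - ψh ℓ T)) T (χh ℓ))
    (hupdate : ∀ ℓ, ∀ t ∈ Set.Icc (0 : ℝ) T,
      ε (ℓ + 1) t - ε ℓ t = (θ / β) *
          (2 * (inner ℂ (χt ℓ t) (Matrix.toEuclideanLin μt (ψt (ℓ + 1) t)) : ℂ).im
           - 2 * (inner ℂ (χh ℓ t) (Matrix.toEuclideanLin μh (ψh (ℓ + 1) t)) : ℂ).im
           - β * (ε (ℓ + 1) t + ε ℓ t))) :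
    Monotone (fun ℓ => Jfun T β ψ₁ (ε ℓ) (ψt ℓ) (ψh ℓ)) ∧
    (∀ ℓ, Jfun T β ψ₁ (ε ℓ) (ψt ℓ) (ψh ℓ) ≤ 4) ∧
    ∃ l : ℝ, Filter.Tendsto (fun ℓ => Jfun T β ψ₁ (ε ℓ) (ψt ℓ) (ψh ℓ))
      Filter.atTop (nhds l) := by
  have hJ : ∀ m, Jfun T β ψ₁ (ε m) (ψt m) (ψh m)
      = Complex.normSq (inner ℂ ψ₁ (ψt m T - ψh m T) : ℂ)
        - β * ∫ t in (0:ℝ)..T, ε m t ^ 2 := by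
    intro m
    simp only [Jfun, rankOne]
    rw [inner_smul_right, ← inner_conj_symm (ψt m T - ψh m T) ψ₁, Complex.mul_conj]
    simp
  -- norm preservation
  have hnt : ∀ m, ‖ψt m T‖ = 1 := by
    intro m
    have h := norm_preserved T hT.le H μt hH hμt (ε m) (hε m) (ψt m) (hψt m).2
    rw [(hψt m).1, hψ₀] at h; exact h
  have hnh : ∀ m, ‖ψh m T‖ = 1 := by
    intro m
    have h := norm_preserved T hT.le H μh hH hμh (ε m) (hε m) (ψh m) (hψh m).2
    rw [(hψh m).1, hψ₀] at h; exact h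
  have hb4 : ∀ m, Complex.normSq (inner ℂ ψ₁ (ψt m T - ψh m T) : ℂ) ≤ 4 := by
    intro m
    have h1 : ‖(inner ℂ ψ₁ (ψt m T - ψh m T) : ℂ)‖ ≤ ‖ψ₁‖ * ‖ψt m T - ψh m T‖ :=
      norm_inner_le_norm _ _
    have h2 : ‖ψt m T - ψh m T‖ ≤ 2 := by
      calc ‖ψt m T - ψh m T‖ ≤ ‖ψt m T‖ + ‖ψh m T‖ := norm_sub_le _ _
      _ = 2 := by rw [hnt m, hnh m]; norm_num
    rw [hψ₁, one_mul] at h1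
    have h3 : Complex.normSq (inner ℂ ψ₁ (ψt m T - ψh m T) : ℂ)
        = ‖(inner ℂ ψ₁ (ψt m T - ψh m T) : ℂ)‖ ^ 2 := by
      rw [Complex.normSq_eq_norm_sq]
    nlinarith [norm_nonneg (inner ℂ ψ₁ (ψt m T - ψh m T) : ℂ)]
  have hbound : ∀ m, Jfun T β ψ₁ (ε m) (ψt m) (ψh m) ≤ 4 := by
    intro m
    rw [hJ m]
    have h0 : 0 ≤ ∫ t in (0:ℝ)..T, ε m t ^ 2 :=
      intervalIntegral.integral_nonneg hT.le (fun u _ => sq_nonneg _)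
    nlinarith [hb4 m]
  -- monotonicity
  have hmono : ∀ ℓ, Jfun T β ψ₁ (ε ℓ) (ψt ℓ) (ψh ℓ) ≤ Jfun T β ψ₁ (ε (ℓ+1)) (ψt (ℓ+1)) (ψh (ℓ+1)) := by
    intro ℓ
    set b : ℂ := (inner ℂ ψ₁ (ψt ℓ T - ψh ℓ T) : ℂ) with hbdef
    set a : ℂ := (inner ℂ ψ₁ (ψt (ℓ+1) T - ψh (ℓ+1) T) : ℂ) with hadef
    set δ : ℝ → ℝ := fun t => ε (ℓ+1) t - ε ℓ t with hδdef
    set Ft : ℝ → ℝ := fun t => (inner ℂ (χt ℓ t) (toEuclideanLin μt (ψt (ℓ+1) t)) : ℂ).im with hFtdef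
    set Fh : ℝ → ℝ := fun t => (inner ℂ (χh ℓ t) (toEuclideanLin μh (ψh (ℓ+1) t)) : ℂ).im with hFhdef
    -- the four FTC identities
    have h1 := pairing_integral T hT.le H μt hH hμt (ε ℓ) (ε (ℓ+1)) (hε ℓ) (hε (ℓ+1))
      (χt ℓ) (ψt (ℓ+1)) (hχt ℓ).2 (hψt (ℓ+1)).2
    have h2 := pairing_integral T hT.le H μt hH hμt (ε ℓ) (ε ℓ) (hε ℓ) (hε ℓ)
      (χt ℓ) (ψt ℓ) (hχt ℓ).2 (hψt ℓ).2
    simp only [sub_self, zero_mul, intervalIntegral.integral_zero] at h2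
    have h3 := pairing_integral T hT.le H μh hH hμh (ε ℓ) (ε (ℓ+1)) (hε ℓ) (hε (ℓ+1))
      (χh ℓ) (ψh (ℓ+1)) (hχh ℓ).2 (hψh (ℓ+1)).2
    have h4 := pairing_integral T hT.le H μh hH hμh (ε ℓ) (ε ℓ) (hε ℓ) (hε ℓ)
      (χh ℓ) (ψh ℓ) (hχh ℓ).2 (hψh ℓ).2
    simp only [sub_self, zero_mul, intervalIntegral.integral_zero] at h4
    have e0t : ψt (ℓ+1) 0 = ψt ℓ 0 := by rw [(hψt (ℓ+1)).1, (hψt ℓ).1]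
    have e0h : ψh (ℓ+1) 0 = ψh ℓ 0 := by rw [(hψh (ℓ+1)).1, (hψh ℓ).1]
    rw [e0t] at h1
    rw [e0h] at h3
    have k1 : (inner ℂ (χt ℓ T) (ψt (ℓ+1) T) : ℂ).re - (inner ℂ (χt ℓ T) (ψt ℓ T) : ℂ).re
        = ∫ t in (0:ℝ)..T, δ t * Ft t := by
      simp only [hδdef, hFtdef]; linarith
    have k2 : (inner ℂ (χh ℓ T) (ψh (ℓ+1) T) : ℂ).re - (inner ℂ (χh ℓ T) (ψh ℓ T) : ℂ).re
        = ∫ t in (0:ℝ)..T, δ t * Fh t := by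
      simp only [hδdef, hFhdef]; linarith
    -- rank-one pairing identity
    have hab : (starRingEnd ℂ) b * (a - b)
        = ((inner ℂ (χt ℓ T) (ψt (ℓ+1) T) : ℂ) - (inner ℂ (χt ℓ T) (ψt ℓ T) : ℂ))
          - ((inner ℂ (χh ℓ T) (ψh (ℓ+1) T) : ℂ) - (inner ℂ (χh ℓ T) (ψh ℓ T) : ℂ)) := by
      rw [(hχt ℓ).1, (hχh ℓ).1]
      simp only [rankOne, inner_smul_left, hadef, hbdef, inner_sub_right]
      ring
    have habre : ((starRingEnd ℂ) b * (a - b)).re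
        = (∫ t in (0:ℝ)..T, δ t * Ft t) - ∫ t in (0:ℝ)..T, δ t * Fh t := by
      rw [hab]
      simp only [Complex.sub_re]
      linarith
    -- normSq expansion
    have hsq : Complex.normSq a
        = Complex.normSq b + Complex.normSq (a - b) + 2 * ((starRingEnd ℂ) b * (a - b)).re := by
      have h := Complex.normSq_add b (a - b)
      rw [show b + (a - b) = a by ring] at h
      have hswap : (b * (starRingEnd ℂ) (a - b)).re = ((starRingEnd ℂ) b * (a - b)).re := by
        simp [Complex.mul_re]; ring
      linarith
    -- integrability
    have cχt : ContinuousOn (χt ℓ) (Set.Icc 0 T) :=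
      fun t ht => (((hχt ℓ).2 t ht).continuousAt).continuousWithinAt
    have cχh : ContinuousOn (χh ℓ) (Set.Icc 0 T) :=
      fun t ht => (((hχh ℓ).2 t ht).continuousAt).continuousWithinAt
    have cψt : ContinuousOn (ψt (ℓ+1)) (Set.Icc 0 T) :=
      fun t ht => (((hψt (ℓ+1)).2 t ht).continuousAt).continuousWithinAt
    have cψh : ContinuousOn (ψh (ℓ+1)) (Set.Icc 0 T) :=
      fun t ht => (((hψh (ℓ+1)).2 t ht).continuousAt).continuousWithinAt
    have hδc : Continuous δ := (hε (ℓ+1)).sub (hε ℓ)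
    have cFt : ContinuousOn Ft (Set.Icc 0 T) :=
      Complex.continuous_im.comp_continuousOn
        (cχt.inner ((LinearMap.continuous_of_finiteDimensional _).comp_continuousOn cψt))
    have cFh : ContinuousOn Fh (Set.Icc 0 T) :=
      Complex.continuous_im.comp_continuousOn
        (cχh.inner ((LinearMap.continuous_of_finiteDimensional _).comp_continuousOn cψh))
    have iFt : IntervalIntegrable (fun t => δ t * Ft t) MeasureTheory.volume 0 T :=
      ((hδc.continuousOn.mul cFt).mono (by rw [Set.uIcc_of_le hT.le])).intervalIntegrable
    have iFh : IntervalIntegrable (fun t => δ t * Fh t) MeasureTheory.volume 0 T :=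
      ((hδc.continuousOn.mul cFh).mono (by rw [Set.uIcc_of_le hT.le])).intervalIntegrable
    have iε1 : IntervalIntegrable (fun t => ε (ℓ+1) t ^ 2) MeasureTheory.volume 0 T :=
      (((hε (ℓ+1)).pow 2).continuousOn).intervalIntegrable
    have iε0 : IntervalIntegrable (fun t => ε ℓ t ^ 2) MeasureTheory.volume 0 T :=
      (((hε ℓ).pow 2).continuousOn).intervalIntegrable
    -- split the combined integral
    have hsplit : (∫ t in (0:ℝ)..T, δ t * (2 * Ft t - 2 * Fh t - β * (ε (ℓ+1) t + ε ℓ t)))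
        = 2 * (∫ t in (0:ℝ)..T, δ t * Ft t) - 2 * (∫ t in (0:ℝ)..T, δ t * Fh t)
          - β * ((∫ t in (0:ℝ)..T, ε (ℓ+1) t ^ 2) - ∫ t in (0:ℝ)..T, ε ℓ t ^ 2) := by
      have hptw : ∀ t, δ t * (2 * Ft t - 2 * Fh t - β * (ε (ℓ+1) t + ε ℓ t))
          = 2 * (δ t * Ft t) - 2 * (δ t * Fh t) - β * (ε (ℓ+1) t ^ 2 - ε ℓ t ^ 2) := by
        intro t; simp only [hδdef]; ring
      simp_rw [hptw]
      rw [intervalIntegral.integral_sub ((iFt.const_mul 2).sub (iFh.const_mul 2))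
          ((iε1.sub iε0).const_mul β),
        intervalIntegral.integral_sub (iFt.const_mul 2) (iFh.const_mul 2),
        intervalIntegral.integral_const_mul, intervalIntegral.integral_const_mul,
        intervalIntegral.integral_const_mul, intervalIntegral.integral_sub iε1 iε0]
    -- use the update equation
    have hcongr : (∫ t in (0:ℝ)..T, δ t * (2 * Ft t - 2 * Fh t - β * (ε (ℓ+1) t + ε ℓ t)))
        = ∫ t in (0:ℝ)..T, (β / θ) * δ t ^ 2 := by
      apply intervalIntegral.integral_congr
      intro t ht
      rw [Set.uIcc_of_le hT.le] at ht
      have hu := hupdate ℓ t ht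
      have hG : 2 * Ft t - 2 * Fh t - β * (ε (ℓ+1) t + ε ℓ t) = (β / θ) * δ t := by
        rw [hδdef]
        simp only [hFtdef, hFhdef]
        rw [hu]
        field_simp
      show δ t * (2 * Ft t - 2 * Fh t - β * (ε (ℓ + 1) t + ε ℓ t)) = β / θ * δ t ^ 2
      rw [hG]; ring
    have key : (∫ t in (0:ℝ)..T, (β / θ) * δ t ^ 2)
        = 2 * (∫ t in (0:ℝ)..T, δ t * Ft t) - 2 * (∫ t in (0:ℝ)..T, δ t * Fh t)
          - β * ((∫ t in (0:ℝ)..T, ε (ℓ+1) t ^ 2) - ∫ t in (0:ℝ)..T, ε ℓ t ^ 2) := by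
      rw [← hcongr, hsplit]
    have hnn : 0 ≤ ∫ t in (0:ℝ)..T, (β / θ) * δ t ^ 2 :=
      intervalIntegral.integral_nonneg hT.le
        (fun u _ => mul_nonneg (le_of_lt (div_pos hβ hθ)) (sq_nonneg _))
    have := Complex.normSq_nonneg (a - b)
    rw [hJ ℓ, hJ (ℓ+1)]
    rw [← hbdef, ← hadef] at *
    linarith [hsq, habre, key, hnn, Complex.normSq_nonneg (a - b)]
  refine ⟨monotone_nat_of_le_succ hmono, hbound, ?_⟩
  exact ⟨_, tendsto_atTop_ciSup (monotone_nat_of_le_succ hmono)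
    ⟨4, by rintro x ⟨m, rfl⟩; exact hbound m⟩⟩
end
end

section
/- Let ε, ε' ∈ ℝᴹ be two discrete controls, let ψ̃, ψ̂ (resp. ψ̃', ψ̂') be the discrete trajectories generated from ψ₀ by the Strang propagators with control ε (resp. ε') and Hermitian dipoles μ̃, μ̂, and let χ̃, χ̂ be the discrete adjoint trajectories propagated by the Strang propagators with control ε and dipoles μ̃, μ̂ respectively, normalized so that χ̃_M = χ̂_M = O_{ψ₁}(ψ̃_M − ψ̂_M). Set δψ_M = ψ̃_M − ψ̂_M and δψ'_M = ψ̃'_M − ψ̂'_M. Then J_{Δt}(ε') − J_{Δt}(ε) = ⟨δψ'_M − δψ_M, O_{ψ₁}(δψ'_M − δψ_M)⟩ + Σ_{j=0}^{M−1} [ 2 Re⟨χ̃_{j+1}, (Ũ_j(ε') − Ũ_j(ε)) ψ̃'_j⟩ − 2 Re⟨χ̂_{j+1}, (Û_j(ε') − Û_j(ε)) ψ̂'_j⟩ − β Δt ((ε'_j)² − (ε_j)²) ], where Ũ_j and Û_j denote the Strang propagators built with dipoles μ̃ and μ̂ respectively. -/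
noncomputable section

open Matrix

/-- The Strang splitting propagator
`U = exp(i H Δt/2) · exp(i ε_j μ Δt) · exp(i H Δt/2)`. -/
def strangU {n : ℕ} (H μ : Matrix (Fin n) (Fin n) ℂ) (Δt εj : ℝ) :
    Matrix (Fin n) (Fin n) ℂ :=
  NormedSpace.exp ((Complex.I * ((Δt : ℂ) / 2)) • H) *
  NormedSpace.exp ((Complex.I * (εj : ℂ) * (Δt : ℂ)) • μ) *
  NormedSpace.exp ((Complex.I * ((Δt : ℂ) / 2)) • H)

/-- The time-discretized selectivity functional
`J_{Δt}(ε) = ⟨ψ̃_M − ψ̂_M, O_{ψ₁}(ψ̃_M − ψ̂_M)⟩ − β Δt Σ_{j<M} ε_j²`,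
expressed in terms of the discrete trajectories `ψ̃, ψ̂`. -/
def Jdisc {n : ℕ} (M : ℕ) (Δt β : ℝ) (ψ₁ : EuclideanSpace ℂ (Fin n)) (ε : ℕ → ℝ)
    (ψt ψh : ℕ → EuclideanSpace ℂ (Fin n)) : ℝ :=
  (inner ℂ (ψt M - ψh M) (rankOne ψ₁ (ψt M - ψh M)) : ℂ).re
    - β * Δt * ∑ j ∈ Finset.range M, (ε j) ^ 2

lemma exp_skew_unitary {n : ℕ} (A : Matrix (Fin n) (Fin n) ℂ) (hA : A.IsHermitian)
    (c : ℂ) (hc : star c = -c) :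
    (NormedSpace.exp (c • A))ᴴ * NormedSpace.exp (c • A) = 1 := by
  have h1 : (c • A)ᴴ = -(c • A) := by
    rw [conjTranspose_smul, hA.eq, hc, neg_smul]
  have h2 := Matrix.exp_add_of_commute (-(c • A)) (c • A)
    ((Commute.refl (c • A)).neg_left)
  rw [← Matrix.exp_conjTranspose, h1, ← h2, neg_add_cancel, NormedSpace.exp_zero]

lemma strangU_unitary {n : ℕ} (H μ : Matrix (Fin n) (Fin n) ℂ) (hH : H.IsHermitian)
    (hμ : μ.IsHermitian) (Δt e : ℝ) :
    (strangU H μ Δt e)ᴴ * strangU H μ Δt e = 1 := by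
  set A := NormedSpace.exp ((Complex.I * ((Δt : ℂ) / 2)) • H) with hAdef
  set B := NormedSpace.exp ((Complex.I * (e : ℂ) * (Δt : ℂ)) • μ) with hBdef
  have hA : Aᴴ * A = 1 := exp_skew_unitary H hH _ (by simp [Complex.ext_iff])
  have hB : Bᴴ * B = 1 := exp_skew_unitary μ hμ _ (by simp [Complex.ext_iff])
  show (A * B * A)ᴴ * (A * B * A) = 1
  rw [conjTranspose_mul, conjTranspose_mul]
  simp only [mul_assoc]
  rw [← mul_assoc Aᴴ A, hA, one_mul, ← mul_assoc Bᴴ B, hB, one_mul, hA]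

lemma inner_map_map {n : ℕ} {U : Matrix (Fin n) (Fin n) ℂ} (hU : Uᴴ * U = 1)
    (x y : EuclideanSpace ℂ (Fin n)) :
    (inner ℂ (Matrix.toEuclideanLin U x) (Matrix.toEuclideanLin U y) : ℂ) = inner ℂ x y := by
  rw [← LinearMap.adjoint_inner_right]
  congr 1
  rw [← Matrix.toEuclideanLin_conjTranspose_eq_adjoint]
  rw [Matrix.toEuclideanLin_apply, Matrix.toEuclideanLin_apply]
  simp [Matrix.mulVec_mulVec, hU]

lemma final_alg {n : ℕ} (ψ₁ u v : EuclideanSpace ℂ (Fin n)) :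
    (inner ℂ u (rankOne ψ₁ u) : ℂ).re - (inner ℂ v (rankOne ψ₁ v) : ℂ).re
      = (inner ℂ (u - v) (rankOne ψ₁ (u - v)) : ℂ).re
        + 2 * (inner ℂ (rankOne ψ₁ v) (u - v) : ℂ).re := by
  simp only [rankOne, inner_smul_right, inner_smul_left, inner_sub_right, inner_sub_left]
  rw [← inner_conj_symm ψ₁ u, ← inner_conj_symm ψ₁ v]
  set A := (inner ℂ ψ₁ u : ℂ)
  set B := (inner ℂ ψ₁ v : ℂ)
  simp only [Complex.mul_re, Complex.sub_re, Complex.sub_im, Complex.mul_im,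
    Complex.conj_re, Complex.conj_im]
  ring

/-- the discrete variation identity for the time-discretized
selectivity functional. -/
theorem discrete_variation_identity {n : ℕ} (M : ℕ) (Δt T β : ℝ) (hΔt : 0 < Δt)
    (hMT : M * Δt = T) (hβ : 0 < β)
    (H μt μh : Matrix (Fin n) (Fin n) ℂ) (hH : H.IsHermitian)
    (hμt : μt.IsHermitian) (hμh : μh.IsHermitian)
    (ψ₀ ψ₁ : EuclideanSpace ℂ (Fin n)) (hψ₀ : ‖ψ₀‖ = 1) (hψ₁ : ‖ψ₁‖ = 1)
    (ε ε' : ℕ → ℝ)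
    (ψt ψh ψt' ψh' χt χh : ℕ → EuclideanSpace ℂ (Fin n))
    (hψt0 : ψt 0 = ψ₀) (hψh0 : ψh 0 = ψ₀) (hψt'0 : ψt' 0 = ψ₀) (hψh'0 : ψh' 0 = ψ₀)
    (hψt : ∀ j < M, ψt (j + 1) = Matrix.toEuclideanLin (strangU H μt Δt (ε j)) (ψt j))
    (hψh : ∀ j < M, ψh (j + 1) = Matrix.toEuclideanLin (strangU H μh Δt (ε j)) (ψh j))
    (hψt' : ∀ j < M, ψt' (j + 1) = Matrix.toEuclideanLin (strangU H μt Δt (ε' j)) (ψt' j))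
    (hψh' : ∀ j < M, ψh' (j + 1) = Matrix.toEuclideanLin (strangU H μh Δt (ε' j)) (ψh' j))
    (hχt : ∀ j < M, χt (j + 1) = Matrix.toEuclideanLin (strangU H μt Δt (ε j)) (χt j))
    (hχh : ∀ j < M, χh (j + 1) = Matrix.toEuclideanLin (strangU H μh Δt (ε j)) (χh j))
    (hχtM : χt M = rankOne ψ₁ (ψt M - ψh M))
    (hχhM : χh M = rankOne ψ₁ (ψt M - ψh M)) :
    Jdisc M Δt β ψ₁ ε' ψt' ψh' - Jdisc M Δt β ψ₁ ε ψt ψh =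
      (inner ℂ ((ψt' M - ψh' M) - (ψt M - ψh M))
        (rankOne ψ₁ ((ψt' M - ψh' M) - (ψt M - ψh M))) : ℂ).re
      + ∑ j ∈ Finset.range M,
          (2 * (inner ℂ (χt (j + 1))
              (Matrix.toEuclideanLin (strangU H μt Δt (ε' j) - strangU H μt Δt (ε j))
                (ψt' j)) : ℂ).re
           - 2 * (inner ℂ (χh (j + 1))
              (Matrix.toEuclideanLin (strangU H μh Δt (ε' j) - strangU H μh Δt (ε j))
                (ψh' j)) : ℂ).re
           - β * Δt * ((ε' j) ^ 2 - (ε j) ^ 2)) := by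
  -- generic conservation along a common discrete evolution
  have cons : ∀ (μ : Matrix (Fin n) (Fin n) ℂ), μ.IsHermitian →
      ∀ (χ ψ : ℕ → EuclideanSpace ℂ (Fin n)),
      (∀ j < M, χ (j + 1) = Matrix.toEuclideanLin (strangU H μ Δt (ε j)) (χ j)) →
      (∀ j < M, ψ (j + 1) = Matrix.toEuclideanLin (strangU H μ Δt (ε j)) (ψ j)) →
      ∀ j, j ≤ M → (inner ℂ (χ j) (ψ j) : ℂ) = inner ℂ (χ 0) (ψ 0) := by
    intro μ hμ χ ψ hχ hψ j hj
    induction j with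
    | zero => rfl
    | succ k ih =>
      have hk : k < M := hj
      rw [hχ k hk, hψ k hk, inner_map_map (strangU_unitary H μ hH hμ Δt (ε k)),
        ih hk.le]
  -- generic telescoping identity
  have tel : ∀ (μ : Matrix (Fin n) (Fin n) ℂ), μ.IsHermitian →
      ∀ (χ ψ' : ℕ → EuclideanSpace ℂ (Fin n)),
      (∀ j < M, χ (j + 1) = Matrix.toEuclideanLin (strangU H μ Δt (ε j)) (χ j)) →
      (∀ j < M, ψ' (j + 1) = Matrix.toEuclideanLin (strangU H μ Δt (ε' j)) (ψ' j)) →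
      (∑ j ∈ Finset.range M, (inner ℂ (χ (j + 1))
          (Matrix.toEuclideanLin (strangU H μ Δt (ε' j) - strangU H μ Δt (ε j)) (ψ' j)) : ℂ))
        = inner ℂ (χ M) (ψ' M) - inner ℂ (χ 0) (ψ' 0) := by
    intro μ hμ χ ψ' hχ hψ'
    rw [Finset.sum_congr rfl (fun j hj => ?_)]
    · exact Finset.sum_range_sub (fun j => (inner ℂ (χ j) (ψ' j) : ℂ)) M
    · have hj' : j < M := Finset.mem_range.mp hj
      have e1 : (Matrix.toEuclideanLin (strangU H μ Δt (ε' j) - strangU H μ Δt (ε j))) (ψ' j)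
          = Matrix.toEuclideanLin (strangU H μ Δt (ε' j)) (ψ' j)
            - Matrix.toEuclideanLin (strangU H μ Δt (ε j)) (ψ' j) := by
        rw [map_sub]; rfl
      rw [e1, inner_sub_right, ← hψ' j hj']
      congr 1
      rw [hχ j hj', inner_map_map (strangU_unitary H μ hH hμ Δt (ε j))]
  -- telescoped sums
  have telt : (∑ j ∈ Finset.range M, (inner ℂ (χt (j + 1))
        (Matrix.toEuclideanLin (strangU H μt Δt (ε' j) - strangU H μt Δt (ε j)) (ψt' j)) : ℂ))
      = inner ℂ (χt M) (ψt' M - ψt M) := by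
    rw [tel μt hμt χt ψt' hχt hψt', inner_sub_right]
    congr 1
    rw [hψt'0, ← hψt0, cons μt hμt χt ψt hχt hψt M le_rfl]
  have telh : (∑ j ∈ Finset.range M, (inner ℂ (χh (j + 1))
        (Matrix.toEuclideanLin (strangU H μh Δt (ε' j) - strangU H μh Δt (ε j)) (ψh' j)) : ℂ))
      = inner ℂ (χh M) (ψh' M - ψh M) := by
    rw [tel μh hμh χh ψh' hχh hψh', inner_sub_right]
    congr 1
    rw [hψh'0, ← hψh0, cons μh hμh χh ψh hχh hψh M le_rfl]
  -- split the big sum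
  have hsum : (∑ j ∈ Finset.range M,
          (2 * (inner ℂ (χt (j + 1))
              (Matrix.toEuclideanLin (strangU H μt Δt (ε' j) - strangU H μt Δt (ε j))
                (ψt' j)) : ℂ).re
           - 2 * (inner ℂ (χh (j + 1))
              (Matrix.toEuclideanLin (strangU H μh Δt (ε' j) - strangU H μh Δt (ε j))
                (ψh' j)) : ℂ).re
           - β * Δt * ((ε' j) ^ 2 - (ε j) ^ 2)))
      = 2 * (inner ℂ (rankOne ψ₁ (ψt M - ψh M))
            ((ψt' M - ψh' M) - (ψt M - ψh M)) : ℂ).re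
        - β * Δt * ((∑ j ∈ Finset.range M, (ε' j) ^ 2) - ∑ j ∈ Finset.range M, (ε j) ^ 2) := by
    rw [Finset.sum_sub_distrib, Finset.sum_sub_distrib, ← Finset.mul_sum, ← Finset.mul_sum,
      ← Complex.re_sum, ← Complex.re_sum, telt, telh, ← Finset.mul_sum,
      Finset.sum_sub_distrib]
    have comb : 2 * (inner ℂ (χt M) (ψt' M - ψt M) : ℂ).re
          - 2 * (inner ℂ (χh M) (ψh' M - ψh M) : ℂ).re
        = 2 * (inner ℂ (rankOne ψ₁ (ψt M - ψh M))
            ((ψt' M - ψh' M) - (ψt M - ψh M)) : ℂ).re := by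
      rw [hχtM, hχhM, ← mul_sub, ← Complex.sub_re, ← inner_sub_right]
      congr 3
      abel
    rw [← comb]
  rw [hsum]
  have key := final_alg ψ₁ (ψt' M - ψh' M) (ψt M - ψh M)
  simp only [Jdisc]
  linarith [key]
end
end
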